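/- arXiv:2311.17384 — 2 statements merged into one kernel-verified Lean document; each statement's English description precedes it below -/
import Mathlib

section
/- Let q1,...,qn ∈ (Z_2)^n and suppose the matrix with rows q1,...,qn has rank r over Z_2. Let ψ ∈ C^{2^n} be a nonzero simultaneous eigenvector of the commuting Pauli operators W(p_j,q_j) with eigenvalues (-1)^{λ_j}, j=1,...,n, where {(p_j,q_j)} spans a Lagrangian subspace of (Z_2)^{2n}. Then ψ has nonzero amplitude on exactly 2^r computational basis states. -/
open scoped Matrix ComplexConjugate

/-- Bit vectors of length `n` over `ℤ/2`. -/
abbrev V2 (n : ℕ) := Fin n → ZMod 2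

/-- Dot product over `ℤ/2`. -/
def dotZ2 {n : ℕ} (a b : V2 n) : ZMod 2 := ∑ i, a i * b i

/-- The symplectic product on `(ℤ/2)^{2n}`: `[(p₁,q₁),(p₂,q₂)] = p₁·q₂ - p₂·q₁`. -/
def symp {n : ℕ} (x y : V2 n × V2 n) : ZMod 2 := dotZ2 x.1 y.2 - dotZ2 y.1 x.2

/-- The computational basis vector `|z⟩` in `ℂ^{2^n}`. -/
noncomputable def basisVec {n : ℕ} (z : V2 n) : V2 n → ℂ := fun y => if y = z then 1 else 0

/-- The Pauli operator `W(p,q) = (-i)^{p·q mod 4} Z^p X^q`, where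
`Z^p X^q |z⟩ = (-1)^{(z+q)·p} |z+q⟩` (bits of `p·q` lifted to integers). -/
noncomputable def W {n : ℕ} (p q : V2 n) : Matrix (V2 n) (V2 n) ℂ :=
  Matrix.of fun y z =>
    if y = z + q then
      (-Complex.I) ^ ((∑ i, (p i).val * (q i).val) % 4) * (-1 : ℂ) ^ (dotZ2 (z + q) p).val
    else 0
/-- A subspace of `(ℤ/2)^{2n}` is isotropic if the symplectic form vanishes on it. -/
def IsIsotropic {n : ℕ} (L : Submodule (ZMod 2) (V2 n × V2 n)) : Prop :=
  ∀ x ∈ L, ∀ y ∈ L, symp x y = 0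

/-- A Lagrangian subspace: a maximal isotropic subspace of `(ℤ/2)^{2n}`. -/
def IsLagrangian {n : ℕ} (L : Submodule (ZMod 2) (V2 n × V2 n)) : Prop :=
  IsIsotropic L ∧ ∀ L', IsIsotropic L' → L ≤ L' → L' = L

/-! ### Auxiliary lemmas -/

section Aux

lemma z2_cases : ∀ a : ZMod 2, a = 0 ∨ a = 1 := by decide

lemma z2_add_self : ∀ a : ZMod 2, a + a = 0 := by decide

@[simp] lemma z2_val0 : ZMod.val (0 : ZMod 2) = 0 := rfl
@[simp] lemma z2_val1 : ZMod.val (1 : ZMod 2) = 1 := rfl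
@[simp] lemma z2_val2 : ZMod.val (2 : ZMod 2) = 0 := rfl

lemma v2_add_self {n} (v : V2 n) : v + v = 0 := by
  funext i
  show v i + v i = 0
  exact z2_add_self (v i)

lemma neg_one_pow_val_add (a b : ZMod 2) :
    ((-1 : ℂ)) ^ ((a + b).val) = (-1) ^ a.val * (-1) ^ b.val := by
  rcases z2_cases a with h | h <;> rcases z2_cases b with h' | h' <;>
    subst h <;> subst h' <;> norm_num

lemma neg_one_pow_val_inj (a b : ZMod 2) (h : ((-1 : ℂ)) ^ a.val = (-1) ^ b.val) : a = b := by
  rcases z2_cases a with ha | ha <;> rcases z2_cases b with hb | hb <;>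
    subst ha <;> subst hb <;> first | rfl | (norm_num at h)

lemma neg_one_pow_val_ne_zero (a : ZMod 2) : ((-1 : ℂ)) ^ a.val ≠ 0 := by
  rcases z2_cases a with h | h <;> subst h <;> norm_num

lemma dotZ2_add_left {n} (a b c : V2 n) : dotZ2 (a + b) c = dotZ2 a c + dotZ2 b c := by
  simp [dotZ2, add_mul, Finset.sum_add_distrib]
lemma dotZ2_add_right {n} (a b c : V2 n) : dotZ2 a (b + c) = dotZ2 a b + dotZ2 a c := by
  simp [dotZ2, mul_add, Finset.sum_add_distrib]
lemma dotZ2_comm {n} (a b : V2 n) : dotZ2 a b = dotZ2 b a := by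
  simp [dotZ2, mul_comm]
@[simp] lemma dotZ2_zero_left {n} (b : V2 n) : dotZ2 0 b = 0 := by simp [dotZ2]
@[simp] lemma dotZ2_zero_right {n} (b : V2 n) : dotZ2 b 0 = 0 := by simp [dotZ2]
lemma dotZ2_smul_left {n} (c : ZMod 2) (a b : V2 n) : dotZ2 (c • a) b = c * dotZ2 a b := by
  simp [dotZ2, Finset.mul_sum, mul_assoc]
lemma dotZ2_smul_right {n} (c : ZMod 2) (a b : V2 n) : dotZ2 a (c • b) = c * dotZ2 a b := by
  rw [dotZ2_comm, dotZ2_smul_left, dotZ2_comm]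

lemma symp_comm {n} (x y : V2 n × V2 n) : symp x y = symp y x := by
  have : ∀ a b : ZMod 2, a - b = b - a := by decide
  rw [symp, symp, this]

@[simp] lemma symp_self {n} (x : V2 n × V2 n) : symp x x = 0 := by
  rw [symp, dotZ2_comm, sub_self]

lemma symp_add_right {n} (x y z : V2 n × V2 n) : symp x (y + z) = symp x y + symp x z := by
  simp only [symp, Prod.fst_add, Prod.snd_add, dotZ2_add_left, dotZ2_add_right]
  ring
lemma symp_add_left {n} (x y z : V2 n × V2 n) : symp (x + y) z = symp x z + symp y z := by
  rw [symp_comm, symp_add_right, symp_comm z x, symp_comm z y]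
lemma symp_smul_right {n} (c : ZMod 2) (x y : V2 n × V2 n) : symp x (c • y) = c * symp x y := by
  simp only [symp, Prod.smul_fst, Prod.smul_snd, dotZ2_smul_left, dotZ2_smul_right, mul_sub]
lemma symp_smul_left {n} (c : ZMod 2) (x y : V2 n × V2 n) : symp (c • x) y = c * symp x y := by
  rw [symp_comm, symp_smul_right, symp_comm]
@[simp] lemma symp_zero_right {n} (x : V2 n × V2 n) : symp x 0 = 0 := by
  simp [symp]

/-- The dot product as a bilinear form on `V2 n`. -/
def dotForm (n : ℕ) : LinearMap.BilinForm (ZMod 2) (V2 n) :=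
  LinearMap.mk₂ (ZMod 2) dotZ2 dotZ2_add_left dotZ2_smul_left dotZ2_add_right dotZ2_smul_right

@[simp] lemma dotForm_apply {n} (a b : V2 n) : dotForm n a b = dotZ2 a b := rfl

/-- The symplectic form as a bilinear form on `V2 n × V2 n`. -/
def sympForm (n : ℕ) : LinearMap.BilinForm (ZMod 2) (V2 n × V2 n) :=
  LinearMap.mk₂ (ZMod 2) symp symp_add_left symp_smul_left symp_add_right symp_smul_right

@[simp] lemma sympForm_apply {n} (x y : V2 n × V2 n) : sympForm n x y = symp x y := rfl

lemma dotForm_nondeg (n : ℕ) : (dotForm n).Nondegenerate := by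
  constructor <;> intro a ha <;>
  · funext i
    have := ha (Pi.single i 1)
    rw [dotForm_apply, dotZ2] at this
    classical
    rw [Finset.sum_eq_single i (fun j _ hj => by simp [Pi.single_apply, hj]) (by simp)] at this
    simpa using this

lemma dotForm_refl (n : ℕ) : (dotForm n).IsRefl := by
  intro a b h
  rwa [dotForm_apply, dotZ2_comm] at h

/-- The scalar phase appearing in `W p q`. -/
noncomputable def phW {n} (p q : V2 n) : ℂ :=
  (-Complex.I) ^ ((∑ i, (p i).val * (q i).val) % 4)

lemma phW_ne_zero {n} (p q : V2 n) : phW p q ≠ 0 :=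
  pow_ne_zero _ (neg_ne_zero.mpr Complex.I_ne_zero)

lemma mulVec_W {n} (p q : V2 n) (ψ : V2 n → ℂ) (y : V2 n) :
    (W p q).mulVec ψ y =
      (-Complex.I) ^ ((∑ i, (p i).val * (q i).val) % 4) * (-1 : ℂ) ^ (dotZ2 y p).val
        * ψ (y + q) := by
  unfold Matrix.mulVec dotProduct W
  rw [Finset.sum_eq_single (y + q)]
  · have : y = y + q + q := by rw [add_assoc, v2_add_self, add_zero]
    simp only [Matrix.of_apply, ← this, if_pos rfl, if_true]
    try ring
  · intro z _ hz
    simp only [Matrix.of_apply]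
    rw [if_neg, zero_mul]
    intro h
    apply hz
    rw [h, add_assoc, v2_add_self, add_zero]
  · intro h; exact absurd (Finset.mem_univ _) h

section Eig
variable {n : ℕ} (p q : Fin n → V2 n) (lam : Fin n → ZMod 2) (ψ : V2 n → ℂ)
  (heig : ∀ j, (W (p j) (q j)).mulVec ψ = ((-1 : ℂ) ^ (lam j).val) • ψ)

include heig

lemma eig_step (j : Fin n) (y : V2 n) :
    ψ (y + q j) = ((-1 : ℂ) ^ (lam j).val * (phW (p j) (q j))⁻¹
      * ((-1 : ℂ) ^ (dotZ2 y (p j)).val)⁻¹) * ψ y := by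
  have h := congrFun (heig j) y
  rw [mulVec_W] at h
  rw [Pi.smul_apply, smul_eq_mul] at h
  field_simp [phW] at h ⊢
  rw [← h, phW, neg_pow]; ring

lemma eig_iterate (S : Finset (Fin n)) :
    ∃ g : ℂ, g ≠ 0 ∧ ∀ y,
      ψ (y + ∑ j ∈ S, q j) = g * (-1 : ℂ) ^ (dotZ2 y (∑ j ∈ S, p j)).val * ψ y := by
  classical
  induction S using Finset.cons_induction with
  | empty =>
    exact ⟨1, one_ne_zero, fun y => by simp [dotZ2]⟩
  | cons a S ha ih =>
    obtain ⟨g, hg, hgy⟩ := ih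
    refine ⟨(-1 : ℂ) ^ (lam a).val * (phW (p a) (q a))⁻¹
        * ((-1 : ℂ) ^ (dotZ2 (∑ j ∈ S, q j) (p a)).val)⁻¹ * g, ?_, ?_⟩
    · exact mul_ne_zero (mul_ne_zero (mul_ne_zero (neg_one_pow_val_ne_zero _)
        (inv_ne_zero (phW_ne_zero _ _))) (inv_ne_zero (neg_one_pow_val_ne_zero _))) hg
    · intro y
      rw [Finset.sum_cons, Finset.sum_cons]
      have e1 : y + (q a + ∑ j ∈ S, q j) = (y + ∑ j ∈ S, q j) + q a := by ring
      rw [e1, eig_step p q lam ψ heig a (y + ∑ j ∈ S, q j), hgy y,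
        dotZ2_add_left, neg_one_pow_val_add, dotZ2_add_right, neg_one_pow_val_add,
        mul_inv]
      simp only [← inv_pow, inv_neg_one]
      ring

end Eig

/-- Rewriting a `ZMod 2`-linear combination as a sum over a finset. -/
lemma smul_sum_eq_filter_sum {n : ℕ} {M : Type*} [AddCommMonoid M] [Module (ZMod 2) M]
    (c : Fin n → ZMod 2) (v : Fin n → M) :
    ∑ j, c j • v j = ∑ j ∈ Finset.univ.filter (fun j => c j = 1), v j := by
  classical
  rw [Finset.sum_filter]
  congr 1
  funext j
  rcases z2_cases (c j) with h | h <;> rw [h] <;> simp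

end Aux

/-- A stabiliser state whose `q`-part matrix has rank `r` over `ℤ/2` is supported
on exactly `2^r` computational basis states. -/
theorem stab_support_card {n : ℕ} (p q : Fin n → V2 n) (lam : Fin n → ZMod 2)
    (hLag : IsLagrangian (Submodule.span (ZMod 2) (Set.range fun j => (p j, q j))))
    (ψ : V2 n → ℂ) (hψ : ψ ≠ 0)
    (heig : ∀ j, (W (p j) (q j)).mulVec ψ = ((-1 : ℂ) ^ (lam j).val) • ψ) :
    Nat.card {z : V2 n // ψ z ≠ 0} = 2 ^ (Matrix.of fun j i => q j i).rank := by
  classical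
  set L : Submodule (ZMod 2) (V2 n × V2 n) :=
    Submodule.span (ZMod 2) (Set.range fun j => (p j, q j)) with hL
  set Q : Submodule (ZMod 2) (V2 n) := Submodule.span (ZMod 2) (Set.range q) with hQ
  set r : ℕ := Module.finrank (ZMod 2) Q with hr
  -- Step 0: the rank in the statement is `r`.
  have hrank : (Matrix.of fun j i => q j i).rank = r := by
    rw [← Matrix.rank_transpose, Matrix.rank, Matrix.range_mulVecLin]
    congr 1
  -- Step 1: `finrank L ≥ n`.
  have hLn : n ≤ Module.finrank (ZMod 2) L := by
    set f : (V2 n × V2 n) →ₗ[ZMod 2] (Fin n → ZMod 2) :=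
      LinearMap.pi (fun j => (sympForm n).flip (p j, q j)) with hf
    have hker : LinearMap.ker f ≤ L := by
      intro v hv
      have hv' : ∀ j, symp v (p j, q j) = 0 := by
        intro j
        have := congrFun (LinearMap.mem_ker.mp hv) j
        simpa [hf, LinearMap.pi_apply] using this
      have hvL : ∀ x ∈ L, symp v x = 0 := by
        intro x hx
        induction hx using Submodule.span_induction with
        | mem x hx => obtain ⟨j, rfl⟩ := hx; exact hv' j
        | zero => simp
        | add x y _ _ hx hy => rw [symp_add_right, hx, hy, add_zero]
        | smul c x _ hx => rw [symp_smul_right, hx, mul_zero]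
      -- enlarge L by v; still isotropic, so v ∈ L by maximality
      have hiso : IsIsotropic (L ⊔ Submodule.span (ZMod 2) {v}) := by
        intro x hx y hy
        rw [Submodule.mem_sup] at hx hy
        obtain ⟨lx, hlx, sx, hsx, rfl⟩ := hx
        obtain ⟨ly, hly, sy, hsy, rfl⟩ := hy
        obtain ⟨cx, rfl⟩ := Submodule.mem_span_singleton.mp hsx
        obtain ⟨cy, rfl⟩ := Submodule.mem_span_singleton.mp hsy
        rw [symp_add_left, symp_add_right, symp_add_right, symp_smul_left, symp_smul_left,
          symp_smul_right, symp_smul_right, symp_self, hLag.1 lx hlx ly hly, hvL ly hly,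
          symp_comm lx v, hvL lx hlx]
        ring
      have heq := hLag.2 _ hiso le_sup_left
      rw [← heq]
      exact le_sup_right (α := Submodule (ZMod 2) (V2 n × V2 n))
        (Submodule.mem_span_singleton_self v)
    have h1 := LinearMap.finrank_range_add_finrank_ker f
    have h2 : Module.finrank (ZMod 2) (LinearMap.range f) ≤ n := by
      have := Submodule.finrank_le (LinearMap.range f)
      rwa [Module.finrank_pi, Fintype.card_fin] at this
    have h3 : Module.finrank (ZMod 2) (V2 n × V2 n) = n + n := by
      rw [Module.finrank_prod, Module.finrank_pi, Fintype.card_fin]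
    have h4 := Submodule.finrank_mono hker
    omega
  -- Step 2: the submodule `A` of `p`-parts of elements of `L` with zero `q`-part.
  set A : Submodule (ZMod 2) (V2 n) :=
    Submodule.map (LinearMap.fst (ZMod 2) (V2 n) (V2 n))
      (L ⊓ LinearMap.ker (LinearMap.snd (ZMod 2) (V2 n) (V2 n))) with hA
  -- Step 2a: `finrank A ≥ n - r`.
  have hAge : Module.finrank (ZMod 2) A + r ≥ n := by
    set φ : L →ₗ[ZMod 2] V2 n :=
      (LinearMap.snd (ZMod 2) (V2 n) (V2 n)).comp L.subtype with hφ
    have hrange : LinearMap.range φ = Q := by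
      rw [hφ, LinearMap.range_comp, Submodule.range_subtype, hL, Submodule.map_span]
      congr 1
      rw [← Set.range_comp]
      rfl
    have h1 := LinearMap.finrank_range_add_finrank_ker φ
    rw [hrange] at h1
    -- inject `ker φ` into `A`
    set θ : LinearMap.ker φ →ₗ[ZMod 2] V2 n :=
      (LinearMap.fst (ZMod 2) (V2 n) (V2 n)).comp (L.subtype.comp (LinearMap.ker φ).subtype)
      with hθ
    have hθinj : Function.Injective θ := by
      intro x y hxy
      have hx2 : ((x : L) : V2 n × V2 n).2 = 0 := x.2
      have hy2 : ((y : L) : V2 n × V2 n).2 = 0 := y.2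
      apply Subtype.ext; apply Subtype.ext
      exact Prod.ext hxy (by rw [hx2, hy2])
    have hθle : LinearMap.range θ ≤ A := by
      rintro _ ⟨x, rfl⟩
      exact ⟨((x : L) : V2 n × V2 n), ⟨((x : L)).2, x.2⟩, rfl⟩
    have h2 : Module.finrank (ZMod 2) (LinearMap.ker φ) ≤ Module.finrank (ZMod 2) A := by
      rw [← LinearMap.finrank_range_of_inj hθinj]
      exact Submodule.finrank_mono hθle
    omega
  -- Step 3: `Q` equals the dot-orthogonal of `A`.
  have hQA : Q = (dotForm n).orthogonal A := by
    have hle : Q ≤ (dotForm n).orthogonal A := by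
      intro w hw
      intro a ha
      obtain ⟨x, ⟨hxL, hx2⟩, rfl⟩ := ha
      have hx2' : x.2 = 0 := hx2
      have key : ∀ u ∈ Q, dotZ2 x.1 u = 0 := by
        intro u hu
        induction hu using Submodule.span_induction with
        | mem u hu =>
          obtain ⟨j, rfl⟩ := hu
          have h0 := hLag.1 x hxL (p j, q j) (Submodule.subset_span ⟨j, rfl⟩)
          rw [symp, hx2', dotZ2_zero_right, sub_zero] at h0
          exact h0
        | zero => simp
        | add u v _ _ hu hv => rw [dotZ2_add_right, hu, hv, add_zero]
        | smul c u _ hu => rw [dotZ2_smul_right, hu, mul_zero]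
      exact key w hw
    apply Submodule.eq_of_le_of_finrank_le hle
    have horth := LinearMap.BilinForm.finrank_orthogonal (dotForm_nondeg n) A
    rw [horth]
    have hAle : Module.finrank (ZMod 2) A ≤ Module.finrank (ZMod 2) (V2 n) :=
      Submodule.finrank_le A
    have hVn : Module.finrank (ZMod 2) (V2 n) = n := by
      rw [Module.finrank_pi, Fintype.card_fin]
    omega
  -- Step 4: support analysis.
  obtain ⟨y₀, hy₀⟩ : ∃ y₀, ψ y₀ ≠ 0 := by
    by_contra h
    push_neg at h
    exact hψ (funext fun y => h y)
  have hsupp : {z : V2 n | ψ z ≠ 0} = (fun w => y₀ + w) '' (Q : Set (V2 n)) := by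
    apply Set.eq_of_subset_of_subset
    · -- support ⊆ coset of Q
      intro z hz
      have hzQ : z + y₀ ∈ Q := by
        rw [hQA]
        intro a ha
        obtain ⟨x, ⟨hxL, hx2⟩, rfl⟩ := ha
        have hx2' : x.2 = 0 := hx2
        obtain ⟨c, hc⟩ := (Submodule.mem_span_range_iff_exists_fun (ZMod 2)).mp hxL
        have hp : ∑ j, c j • p j = x.1 := by
          have := congrArg (LinearMap.fst (ZMod 2) (V2 n) (V2 n)) hc
          simpa [map_sum] using this
        have hq : ∑ j, c j • q j = 0 := by
          have := congrArg (LinearMap.snd (ZMod 2) (V2 n) (V2 n)) hc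
          simpa [map_sum, hx2'] using this
        set S := Finset.univ.filter (fun j => c j = 1) with hS
        have hpS : ∑ j ∈ S, p j = x.1 := by rw [← smul_sum_eq_filter_sum]; exact hp
        have hqS : ∑ j ∈ S, q j = 0 := by rw [← smul_sum_eq_filter_sum]; exact hq
        obtain ⟨g, hg, hgy⟩ := eig_iterate p q lam ψ heig S
        rw [hpS, hqS] at hgy
        have h1 := hgy y₀
        have h2 := hgy z
        rw [add_zero] at h1 h2
        have e1 : g * (-1 : ℂ) ^ (dotZ2 y₀ x.1).val = 1 := by
          apply mul_right_cancel₀ hy₀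
          rw [one_mul]
          exact h1.symm
        have e2 : g * (-1 : ℂ) ^ (dotZ2 z x.1).val = 1 := by
          apply mul_right_cancel₀ hz
          rw [one_mul]
          exact h2.symm
        have e3 : (-1 : ℂ) ^ (dotZ2 y₀ x.1).val = (-1 : ℂ) ^ (dotZ2 z x.1).val :=
          mul_left_cancel₀ hg (by rw [e1, e2])
        have e4 : dotZ2 y₀ x.1 = dotZ2 z x.1 := neg_one_pow_val_inj _ _ e3
        show dotZ2 x.1 (z + y₀) = 0
        rw [dotZ2_add_right, dotZ2_comm x.1 z, dotZ2_comm x.1 y₀, ← e4]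
        exact z2_add_self _
      refine ⟨z + y₀, hzQ, ?_⟩
      show y₀ + (z + y₀) = z
      rw [add_comm z y₀, ← add_assoc, v2_add_self, zero_add]
    · -- coset of Q ⊆ support
      rintro _ ⟨w, hw, rfl⟩
      obtain ⟨c, hc⟩ := (Submodule.mem_span_range_iff_exists_fun (ZMod 2)).mp hw
      set S := Finset.univ.filter (fun j => c j = 1) with hS
      have hqS : ∑ j ∈ S, q j = w := by rw [← smul_sum_eq_filter_sum]; exact hc
      obtain ⟨g, hg, hgy⟩ := eig_iterate p q lam ψ heig S
      have := hgy y₀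
      rw [hqS] at this
      show ψ (y₀ + w) ≠ 0
      rw [this]
      exact mul_ne_zero (mul_ne_zero hg (neg_one_pow_val_ne_zero _)) hy₀
  -- Step 5: counting.
  have hcount : Nat.card {z : V2 n // ψ z ≠ 0} = Nat.card Q :=
    calc Nat.card {z : V2 n // ψ z ≠ 0} = ({z : V2 n | ψ z ≠ 0}).ncard :=
          Nat.card_coe_set_eq {z : V2 n | ψ z ≠ 0}
      _ = ((fun w => y₀ + w) '' (Q : Set (V2 n))).ncard := by rw [hsupp]
      _ = (Q : Set (V2 n)).ncard := Set.ncard_image_of_injective _ (add_right_injective y₀)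
      _ = Nat.card Q := (Nat.card_coe_set_eq (Q : Set (V2 n))).symm
  have hcard : Nat.card Q = 2 ^ r := by
    have : Fintype Q := Fintype.ofFinite _
    rw [Nat.card_eq_fintype_card, Module.card_eq_pow_finrank (K := ZMod 2), ZMod.card]
  rw [hrank, hcount, hcard]
end

section
/- Let S be a finite set of nonzero vectors spanning C^d, containing a distinguished basis B, and suppose there is a function σ: S → N with: σ(b) minimal on B, and every s ∈ S∖B can be written as a linear combination of two elements of S of strictly smaller σ-value. For each s ∈ S∖B, let D_s be the corresponding 3-term dependency (assigning coefficient 1 to s). Then {D_s : s ∈ S∖B} is a basis of the space of linear dependencies of S. -/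
/-- The evaluation map sending a formal linear combination `α : S → ℂ`
to the vector `∑_{s ∈ S} α(s) • s` in `ℂ^d`. -/
noncomputable def evalD {d : ℕ} (S : Finset (Fin d → ℂ)) : (S → ℂ) →ₗ[ℂ] (Fin d → ℂ) where
  toFun α := ∑ s : S, α s • (s : Fin d → ℂ)
  map_add' a b := by simp [add_smul, Finset.sum_add_distrib]
  map_smul' c a := by simp [smul_smul, Finset.smul_sum]

open Classical in
/-- The 3-term dependency `D_s` assigning `1` to `s` and the negated coefficients to the
two smaller-`σ` elements `t₁ s`, `t₂ s` expressing `s = c₁ s • t₁ s + c₂ s • t₂ s`. -/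
noncomputable def tripleDep {d : ℕ} (S : Finset (Fin d → ℂ))
    (t₁ t₂ : (Fin d → ℂ) → (Fin d → ℂ)) (c₁ c₂ : (Fin d → ℂ) → ℂ)
    (s : Fin d → ℂ) : S → ℂ :=
  fun u => (if (u : Fin d → ℂ) = s then 1 else 0)
    - (if (u : Fin d → ℂ) = t₁ s then c₁ s else 0)
    - (if (u : Fin d → ℂ) = t₂ s then c₂ s else 0)

open Classical in
lemma sum_ite_smul {d : ℕ} (S : Finset (Fin d → ℂ)) (a : Fin d → ℂ) (ha : a ∈ S) (c : ℂ) :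
    ∑ u : S, (if (u : Fin d → ℂ) = a then c else 0) • (u : Fin d → ℂ) = c • a := by
  rw [Fintype.sum_eq_single (⟨a, ha⟩ : S)]
  · simp
  · intro b hb
    have : (b : Fin d → ℂ) ≠ a := fun h => hb (Subtype.ext h)
    simp [this]

open Classical in
lemma evalD_tripleDep {d : ℕ} (S : Finset (Fin d → ℂ))
    (t₁ t₂ : (Fin d → ℂ) → (Fin d → ℂ)) (c₁ c₂ : (Fin d → ℂ) → ℂ)
    (s : Fin d → ℂ) (hs : s ∈ S) (h1 : t₁ s ∈ S) (h2 : t₂ s ∈ S)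
    (hd : s = c₁ s • t₁ s + c₂ s • t₂ s) :
    evalD S (tripleDep S t₁ t₂ c₁ c₂ s) = 0 := by
  show ∑ u : S, tripleDep S t₁ t₂ c₁ c₂ s u • (u : Fin d → ℂ) = 0
  simp only [tripleDep, sub_smul, Finset.sum_sub_distrib]
  rw [sum_ite_smul S s hs, sum_ite_smul S (t₁ s) h1, sum_ite_smul S (t₂ s) h2]
  rw [one_smul]
  rw [sub_sub, sub_eq_zero]; exact hd

open Classical in
lemma range_evalD {d : ℕ} (S : Finset (Fin d → ℂ))
    (hspan : Submodule.span ℂ (S : Set (Fin d → ℂ)) = ⊤) :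
    LinearMap.range (evalD S) = ⊤ := by
  rw [eq_top_iff, ← hspan, Submodule.span_le]
  intro a ha
  refine ⟨fun u => if (u : Fin d → ℂ) = a then 1 else 0, ?_⟩
  show ∑ u : S, _ • (u : Fin d → ℂ) = a
  rw [sum_ite_smul S a ha 1, one_smul]

open Classical in
/-- If a finite spanning set `S ⊆ ℂ^d` of nonzero vectors contains a distinguished basis
`B`, a size function `σ` is minimal on `B`, and every `s ∈ S∖B` is a combination of two
elements of `S` of strictly smaller `σ`-value, then the 3-term dependencies
`{D_s : s ∈ S∖B}` form a basis of the space of linear dependencies of `S`. -/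
theorem tripleDep_basis {d : ℕ} (S B : Finset (Fin d → ℂ)) (hBS : B ⊆ S)
    (hnz : ∀ s ∈ S, s ≠ (0 : Fin d → ℂ))
    (hspan : Submodule.span ℂ (S : Set (Fin d → ℂ)) = ⊤)
    (hBind : LinearIndependent ℂ (fun b : B => (b : Fin d → ℂ)))
    (hBspan : Submodule.span ℂ (B : Set (Fin d → ℂ)) = ⊤)
    (σ : (Fin d → ℂ) → ℕ) (hσmin : ∀ b ∈ B, ∀ s ∈ S, σ b ≤ σ s)
    (t₁ t₂ : (Fin d → ℂ) → (Fin d → ℂ)) (c₁ c₂ : (Fin d → ℂ) → ℂ)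
    (hdec : ∀ s ∈ S \ B, t₁ s ∈ S ∧ t₂ s ∈ S ∧ σ (t₁ s) < σ s ∧ σ (t₂ s) < σ s ∧
      s = c₁ s • t₁ s + c₂ s • t₂ s) :
    LinearIndependent ℂ (fun s : {x // x ∈ S \ B} => tripleDep S t₁ t₂ c₁ c₂ s.val) ∧
    Submodule.span ℂ (Set.range fun s : {x // x ∈ S \ B} => tripleDep S t₁ t₂ c₁ c₂ s.val)
      = LinearMap.ker (evalD S) := by
  set v : {x // x ∈ S \ B} → (S → ℂ) := fun s => tripleDep S t₁ t₂ c₁ c₂ s.val with hv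
  -- linear independence
  have hindep : LinearIndependent ℂ v := by
    rw [Fintype.linearIndependent_iff]
    intro g hg
    set M := (S \ B).sup σ with hM
    have key : ∀ k : ℕ, ∀ s : {x // x ∈ S \ B}, M - σ s.val < k → g s = 0 := by
      intro k
      induction k with
      | zero => intro s h; omega
      | succ k ih =>
        intro s hk
        have hsSB : s.val ∈ S \ B := s.2
        have hsval : s.val ∈ S := (Finset.mem_sdiff.mp hsSB).1
        have hσM : σ s.val ≤ M := Finset.le_sup hsSB
        have h0 := congrFun hg ⟨s.val, hsval⟩
        simp only [Finset.sum_apply, Pi.smul_apply, smul_eq_mul, Pi.zero_apply] at h0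
        rw [Fintype.sum_eq_single s ?side] at h0
        case side =>
          intro t hts
          by_cases hgt : g t = 0
          · simp [hgt]
          · have htM : σ t.val ≤ M := Finset.le_sup t.2
            have h1 : s.val ≠ t₁ t.val := by
              intro h
              have hlt := (hdec t.val t.2).2.2.1
              rw [← h] at hlt
              exact hgt (ih t (by omega))
            have h2 : s.val ≠ t₂ t.val := by
              intro h
              have hlt := (hdec t.val t.2).2.2.2.1
              rw [← h] at hlt
              exact hgt (ih t (by omega))
            have h3 : s.val ≠ t.val := fun h => hts (Subtype.ext h.symm)
            simp [hv, tripleDep, h1, h2, h3]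
        · have e1 : s.val ≠ t₁ s.val := by
            intro h
            have hlt := (hdec s.val s.2).2.2.1
            rw [← h] at hlt; omega
          have e2 : s.val ≠ t₂ s.val := by
            intro h
            have hlt := (hdec s.val s.2).2.2.2.1
            rw [← h] at hlt; omega
          simpa [hv, tripleDep, e1, e2] using h0
    intro i
    exact key (M + 1) i (by omega)
  have hker : ∀ i : {x // x ∈ S \ B}, v i ∈ LinearMap.ker (evalD S) := by
    intro i
    obtain ⟨hA, hB2, _, _, hE⟩ := hdec i.val i.2
    exact LinearMap.mem_ker.mpr
      (evalD_tripleDep S t₁ t₂ c₁ c₂ i.val (Finset.mem_sdiff.mp i.2).1 hA hB2 hE)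
  -- dimension count
  have hBcard : B.card = d := by
    have bB : Module.Basis B ℂ (Fin d → ℂ) :=
      Module.Basis.mk hBind (by simpa using hBspan.ge)
    have := Module.finrank_eq_card_basis bB
    simpa using this.symm
  have hdS : d ≤ S.card := by have := Finset.card_le_card hBS; omega
  have hrank := LinearMap.finrank_range_add_finrank_ker (evalD S)
  rw [range_evalD S hspan] at hrank
  have hkerrank : Module.finrank ℂ (LinearMap.ker (evalD S)) = S.card - d := by
    have h1 : Module.finrank ℂ (⊤ : Submodule ℂ (Fin d → ℂ)) = d := by simp
    have h2 : Module.finrank ℂ ({x // x ∈ S} → ℂ) = S.card := by simp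
    omega
  -- restrict family to the kernel
  set K := LinearMap.ker (evalD S) with hK
  set w : {x // x ∈ S \ B} → K := fun i => ⟨v i, hker i⟩ with hw
  have hwind : LinearIndependent ℂ w :=
    hindep.of_comp K.subtype
  have hcard : Fintype.card {x // x ∈ S \ B} = Module.finrank ℂ K := by
    rw [hkerrank, Fintype.card_coe, Finset.card_sdiff_of_subset hBS, hBcard]
  have hwspan : Submodule.span ℂ (Set.range w) = ⊤ :=
    hwind.span_eq_top_of_card_eq_finrank' hcard
  refine ⟨hindep, ?_⟩
  have : Submodule.map K.subtype (Submodule.span ℂ (Set.range w)) = Submodule.span ℂ (Set.range v) := by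
    rw [Submodule.map_span]
    congr 1
    rw [← Set.range_comp]
    rfl
  rw [← this, hwspan, Submodule.map_subtype_top]
end
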